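/- Fix (Δ_1, τ) with Δ_1 ≠ 0 or τ ≠ I_p, bounded. If a sequence of mixture probabilities satisfies π_1^{(n)} → 1 or π_2^{(n)} → 1, then the standardized score T^{(1)} (with either hard or soft assignment) converges in probability to the standard normal vector Z used in generating the observation. -/

import Mathlib

open Matrix MeasureTheory ProbabilityTheory Filter

set_option maxHeartbeats 1000000

/-- Multivariate Gaussian density `φ(y; μ, Σ)` on `ℝ^p`. -/
noncomputable def gphi (p : ℕ) (μ : Fin p → ℝ) (Sig : Matrix (Fin p) (Fin p) ℝ)
    (y : Fin p → ℝ) : ℝ :=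
  (2 * Real.pi) ^ (-(p : ℝ) / 2) * Sig.det ^ (-(1 : ℝ) / 2)
    * Real.exp (-((y - μ) ⬝ᵥ Sig⁻¹.mulVec (y - μ)) / 2)

/-- Posterior probability `w₁ = π₁ φ₁(y)/(π₁ φ₁(y) + π₂ φ₂(y))` of class 1. -/
noncomputable def wpost (p : ℕ) (μ₁ μ₂ : Fin p → ℝ)
    (Sig₁ Sig₂ : Matrix (Fin p) (Fin p) ℝ) (π₁ π₂ : ℝ) (y : Fin p → ℝ) : ℝ :=
  π₁ * gphi p μ₁ Sig₁ y / (π₁ * gphi p μ₁ Sig₁ y + π₂ * gphi p μ₂ Sig₂ y)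

/-- Standardized score `T⁽¹⁾ = (ŝ₁ Σ₁^{-1/2} + ŝ₂ Σ₂^{-1/2})(y - ŝ₁ μ₁ - ŝ₂ μ₂)`,
with `ŝ₂ = 1 - ŝ₁` and `S i = Σ_i^{1/2}`. -/
noncomputable def Tstd (p : ℕ) (μ₁ μ₂ : Fin p → ℝ)
    (S₁ S₂ : Matrix (Fin p) (Fin p) ℝ) (s1 : ℝ) (y : Fin p → ℝ) : Fin p → ℝ :=
  (s1 • S₁⁻¹ + (1 - s1) • S₂⁻¹).mulVec (y - s1 • μ₁ - (1 - s1) • μ₂)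


lemma gphi_pos (p : ℕ) (μ : Fin p → ℝ) {Sig : Matrix (Fin p) (Fin p) ℝ}
    (h : Sig.PosDef) (y : Fin p → ℝ) : 0 < gphi p μ Sig y := by
  have hd : (0:ℝ) < Sig.det := h.det_pos
  have hpi : (0:ℝ) < 2 * Real.pi := by positivity
  unfold gphi
  positivity

lemma gphi_cont (p : ℕ) (μ : Fin p → ℝ) (Sig : Matrix (Fin p) (Fin p) ℝ) :
    Continuous (gphi p μ Sig) := by
  unfold gphi
  refine continuous_const.mul (Real.continuous_exp.comp ?_)
  refine ((Continuous.neg ?_).div_const 2)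
  have h1 : Continuous fun y : Fin p → ℝ => y - μ := continuous_id.sub continuous_const
  have h2 : Continuous fun y : Fin p → ℝ => Sig⁻¹.mulVec (y - μ) :=
    ((Matrix.mulVecLin Sig⁻¹).continuous_of_finiteDimensional).comp h1
  simp only [dotProduct]
  exact continuous_finset_sum _ fun i _ =>
    ((continuous_apply i).comp h1).mul ((continuous_apply i).comp h2)

lemma Tstd_sub (p : ℕ) (μ₁ μ₂ : Fin p → ℝ) (S₁ S₂ : Matrix (Fin p) (Fin p) ℝ)
    (hS₁ : IsUnit S₁.det) (s : ℝ) (z : Fin p → ℝ) :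
    Tstd p μ₁ μ₂ S₁ S₂ s (S₁.mulVec z + μ₁) - z
      = (1 - s) • ((S₂⁻¹ * S₁ - 1).mulVec z + s • S₁⁻¹.mulVec (μ₁ - μ₂)
          + (1 - s) • S₂⁻¹.mulVec (μ₁ - μ₂)) := by
  have h1 : S₁⁻¹ * S₁ = 1 := Matrix.nonsing_inv_mul _ hS₁
  unfold Tstd
  simp only [Matrix.add_mul, Matrix.smul_mul, Matrix.add_mulVec, Matrix.sub_mulVec, Matrix.smul_mulVec,
    Matrix.mulVec_add, Matrix.mulVec_sub, Matrix.mulVec_smul, Matrix.mulVec_mulVec,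
    h1, Matrix.one_mulVec]
  module

lemma Tstd_swap (p : ℕ) (μ₁ μ₂ : Fin p → ℝ) (S₁ S₂ : Matrix (Fin p) (Fin p) ℝ)
    (s : ℝ) (y : Fin p → ℝ) :
    Tstd p μ₂ μ₁ S₂ S₁ (1 - s) y = Tstd p μ₁ μ₂ S₁ S₂ s y := by
  unfold Tstd
  rw [sub_sub_cancel, add_comm, sub_right_comm]

lemma wpost_mem (p : ℕ) (μ₁ μ₂ : Fin p → ℝ) (Sig₁ Sig₂ : Matrix (Fin p) (Fin p) ℝ)
    {a b : ℝ} (h1 : Sig₁.PosDef) (h2 : Sig₂.PosDef) (ha : 0 < a) (hb : 0 < b)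
    (y : Fin p → ℝ) : wpost p μ₁ μ₂ Sig₁ Sig₂ a b y ∈ Set.Ioo (0:ℝ) 1 := by
  have hφ₁ := gphi_pos p μ₁ h1 y
  have hφ₂ := gphi_pos p μ₂ h2 y
  unfold wpost
  constructor
  · positivity
  · rw [div_lt_one (by positivity)]
    nlinarith

lemma wpost_swap (p : ℕ) (μ₁ μ₂ : Fin p → ℝ) (Sig₁ Sig₂ : Matrix (Fin p) (Fin p) ℝ)
    {a b : ℝ} (h1 : Sig₁.PosDef) (h2 : Sig₂.PosDef) (ha : 0 < a) (hb : 0 < b)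
    (y : Fin p → ℝ) :
    wpost p μ₂ μ₁ Sig₂ Sig₁ b a y = 1 - wpost p μ₁ μ₂ Sig₁ Sig₂ a b y := by
  have hφ₁ := gphi_pos p μ₁ h1 y
  have hφ₂ := gphi_pos p μ₂ h2 y
  unfold wpost
  have d1 : a * gphi p μ₁ Sig₁ y + b * gphi p μ₂ Sig₂ y ≠ 0 := by positivity
  have d2 : b * gphi p μ₂ Sig₂ y + a * gphi p μ₁ Sig₁ y ≠ 0 := by positivity
  field_simp
  ring

lemma wpost_ge (p : ℕ) (μ₁ μ₂ : Fin p → ℝ) (Sig₁ Sig₂ : Matrix (Fin p) (Fin p) ℝ)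
    {a θ : ℝ} (h1 : Sig₁.PosDef) (h2 : Sig₂.PosDef) (ha : a ∈ Set.Ioo (0:ℝ) 1)
    (hθ : θ ∈ Set.Ioo (0:ℝ) 1) (y : Fin p → ℝ)
    (hle : gphi p μ₂ Sig₂ y ≤ θ * a / ((1 - θ) * (1 - a)) * gphi p μ₁ Sig₁ y) :
    1 - θ ≤ wpost p μ₁ μ₂ Sig₁ Sig₂ a (1 - a) y := by
  have hφ₁ := gphi_pos p μ₁ h1 y
  have hφ₂ := gphi_pos p μ₂ h2 y
  have hpos : (0:ℝ) < (1 - θ) * (1 - a) := by nlinarith [ha.2, hθ.2]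
  rw [div_mul_eq_mul_div, le_div_iff₀ hpos] at hle
  unfold wpost
  rw [le_div_iff₀ (by nlinarith [ha.1, ha.2])]
  nlinarith [ha.1, ha.2, hθ.1, hθ.2]

lemma tail_tendsto {Ω : Type*} [MeasurableSpace Ω] (P : Measure Ω) [IsFiniteMeasure P]
    {h : Ω → ℝ} (hm : Measurable h) :
    Tendsto (fun m : ℕ => P {ω | (m : ℝ) ≤ h ω}) atTop (nhds 0) := by
  have h0 : (⋂ m : ℕ, {ω | (m:ℝ) ≤ h ω}) = ∅ := by
    ext ω
    simp only [Set.mem_iInter, Set.mem_setOf_eq, Set.mem_empty_iff_false, iff_false,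
      not_forall, not_le]
    obtain ⟨m, hm'⟩ := exists_nat_gt (h ω)
    exact ⟨m, hm'⟩
  have ht := tendsto_measure_iInter_atTop (μ := P)
    (s := fun m : ℕ => {ω | (m:ℝ) ≤ h ω})
    (fun m => (hm measurableSet_Ici).nullMeasurableSet)
    (fun i j hij ω hω => le_trans ((Nat.cast_le (α := ℝ)).2 hij) hω)
    ⟨0, measure_ne_top P _⟩
  rw [h0] at ht
  simpa [Function.comp_def] using ht


lemma mulVec_norm_le (p : ℕ) (A : Matrix (Fin p) (Fin p) ℝ) (z : Fin p → ℝ) :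
    ‖A.mulVec z‖ ≤ (∑ i, ∑ j, |A i j|) * ‖z‖ := by
  have hC : (0:ℝ) ≤ ∑ i, ∑ j, |A i j| := by positivity
  rw [pi_norm_le_iff_of_nonneg (by positivity)]
  intro i
  have h1 : ‖A.mulVec z i‖ = |∑ j, A i j * z j| := by
    simp [Matrix.mulVec, dotProduct, Real.norm_eq_abs]
  rw [h1]
  calc |∑ j, A i j * z j| ≤ ∑ j, |A i j * z j| := Finset.abs_sum_le_sum_abs _ _
    _ = ∑ j, |A i j| * |z j| := by simp [abs_mul]
    _ ≤ ∑ j, |A i j| * ‖z‖ := by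
        refine Finset.sum_le_sum fun j _ => mul_le_mul_of_nonneg_left ?_ (abs_nonneg _)
        simpa [Real.norm_eq_abs] using norm_le_pi_norm z j
    _ = (∑ j, |A i j|) * ‖z‖ := (Finset.sum_mul _ _ _).symm
    _ ≤ (∑ i, ∑ j, |A i j|) * ‖z‖ := by
        refine mul_le_mul_of_nonneg_right ?_ (norm_nonneg _)
        exact Finset.single_le_sum (f := fun i => ∑ j, |A i j|)
          (fun i _ => by positivity) (Finset.mem_univ i)

lemma core {Ω : Type*} [MeasurableSpace Ω] (P : Measure Ω) [IsProbabilityMeasure P]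
    (p : ℕ) (μ₁ μ₂ : Fin p → ℝ)
    (Sig₁ Sig₂ S₁ S₂ : Matrix (Fin p) (Fin p) ℝ)
    (hSig₁ : Sig₁.PosDef) (hSig₂ : Sig₂.PosDef) (hS₁ : S₁.PosDef)
    (π₁ : ℕ → ℝ) (hπ : ∀ n, π₁ n ∈ Set.Ioo (0 : ℝ) 1)
    (Z : Ω → Fin p → ℝ) (c : ℕ → Ω → Fin 2)
    (hZmeas : Measurable Z) (hcmeas : ∀ n, Measurable (c n))
    (hc : ∀ n, P {ω | c n ω = 1} = ENNReal.ofReal (π₁ n))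
    (Y : ℕ → Ω → Fin p → ℝ)
    (hY1 : ∀ n ω, c n ω = 1 → Y n ω = S₁.mulVec (Z ω) + μ₁)
    (s1 : ℕ → (Fin p → ℝ) → ℝ)
    (hs0 : ∀ n y, s1 n y ∈ Set.Icc (0:ℝ) 1)
    (hs1 : ∀ n y, 1 - s1 n y ≤ 2 * (1 - wpost p μ₁ μ₂ Sig₁ Sig₂ (π₁ n) (1 - π₁ n) y))
    (hlim : Tendsto π₁ atTop (nhds 1)) :
    TendstoInMeasure P (fun n ω => Tstd p μ₁ μ₂ S₁ S₂ (s1 n (Y n ω)) (Y n ω)) atTop Z := by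
  rw [tendstoInMeasure_iff_dist]
  intro ε hε
  rw [ENNReal.tendsto_atTop_zero]
  intro δ hδ
  have hδ3 : 0 < δ / 3 := ENNReal.div_pos hδ.ne' (by norm_num)
  obtain ⟨M, hM⟩ : ∃ M : ℕ, P {ω | (M:ℝ) ≤ ‖Z ω‖} < δ/3 :=
    ((tail_tendsto P hZmeas.norm).eventually_lt_const hδ3).exists
  set g : Ω → ℝ := fun ω =>
    gphi p μ₂ Sig₂ (S₁.mulVec (Z ω) + μ₁) / gphi p μ₁ Sig₁ (S₁.mulVec (Z ω) + μ₁) with hgdef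
  have hYcont : Continuous fun z : Fin p → ℝ => S₁.mulVec z + μ₁ :=
    ((Matrix.mulVecLin S₁).continuous_of_finiteDimensional).add continuous_const
  have hgmeas : Measurable g := by
    apply Measurable.div
    · exact (((gphi_cont p μ₂ Sig₂).comp hYcont).measurable).comp hZmeas
    · exact (((gphi_cont p μ₁ Sig₁).comp hYcont).measurable).comp hZmeas
  obtain ⟨m₀, hm₀⟩ : ∃ m : ℕ, P {ω | (m:ℝ) ≤ g ω} < δ/3 :=
    ((tail_tendsto P hgmeas).eventually_lt_const hδ3).exists
  -- constants
  set K : ℝ := ∑ i, ∑ j, |(S₂⁻¹ * S₁ - 1) i j| with hKdef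
  have hK0 : (0:ℝ) ≤ K := by positivity
  set B : ℝ := K * M + ‖S₁⁻¹.mulVec (μ₁ - μ₂)‖ + ‖S₂⁻¹.mulVec (μ₁ - μ₂)‖ with hB
  have hB0 : 0 ≤ B := by positivity
  set θ : ℝ := min (ε / (2 * (B+1))) (1/2) with hθdef
  have hθ0 : 0 < θ := lt_min (by positivity) (by norm_num)
  have hθh : θ ≤ 1/2 := min_le_right _ _
  have hθ1 : θ < 1 := lt_of_le_of_lt hθh (by norm_num)
  have h1θ : (0:ℝ) < 1 - θ := by linarith
  have hθε : θ * (2 * (B+1)) ≤ ε := by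
    have h := min_le_left (ε / (2 * (B+1))) (1/2)
    have h2 : θ * (2 * (B+1)) ≤ ε / (2 * (B+1)) * (2 * (B+1)) :=
      mul_le_mul_of_nonneg_right h (by positivity)
    rwa [div_mul_cancel₀ _ (by positivity : (2:ℝ) * (B+1) ≠ 0)] at h2
  set κ : ℝ := θ / (2 * (1-θ) * ((m₀:ℝ)+1)) with hκdef
  have hden : (0:ℝ) < 2 * (1-θ) * ((m₀:ℝ)+1) := by
    apply mul_pos (mul_pos two_pos h1θ)
    positivity
  have hκ0 : 0 < κ := div_pos hθ0 hden
  have hκA : κ * (1-θ) = θ / (2*((m₀:ℝ)+1)) := by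
    rw [hκdef, eq_div_iff (by positivity : (2:ℝ)*((m₀:ℝ)+1) ≠ 0)]
    field_simp
  -- eventual facts about n
  have h1 : ∀ᶠ n in atTop, ENNReal.ofReal (1 - π₁ n) < δ/3 := by
    have ht : Tendsto (fun n => ENNReal.ofReal (1 - π₁ n)) atTop (nhds 0) := by
      have h0 : Tendsto (fun n => 1 - π₁ n) atTop (nhds 0) := by
        simpa using hlim.const_sub 1
      simpa [Function.comp_def] using (ENNReal.continuous_ofReal.tendsto 0).comp h0
    exact ht.eventually_lt_const hδ3
  have h2 : ∀ᶠ n in atTop, 1 - min κ (1/2) < π₁ n :=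
    hlim.eventually (eventually_gt_nhds (by
      have : (0:ℝ) < min κ (1/2) := lt_min hκ0 (by norm_num)
      linarith))
  obtain ⟨N, hN⟩ := Filter.eventually_atTop.1 (h1.and h2)
  refine ⟨N, fun n hn => ?_⟩
  obtain ⟨hn1, hn2⟩ := hN n hn
  have hπn := hπ n
  have hπhalf : (1/2:ℝ) ≤ π₁ n := by
    have := min_le_right κ (1/2); linarith
  have h1πκ : 1 - π₁ n ≤ κ := by
    have := min_le_left κ (1/2); linarith
  -- the inclusion
  have hsub : {ω | ε ≤ dist (Tstd p μ₁ μ₂ S₁ S₂ (s1 n (Y n ω)) (Y n ω)) (Z ω)}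
      ⊆ ({ω | c n ω ≠ 1} ∪ {ω | (M:ℝ) ≤ ‖Z ω‖}) ∪ {ω | (m₀:ℝ) ≤ g ω} := by
    intro ω hω
    by_contra hcon
    simp only [Set.mem_union, Set.mem_setOf_eq, not_or, not_le, not_not, ne_eq] at hcon
    obtain ⟨⟨hc1, hZM⟩, hgm⟩ := hcon
    simp only [Set.mem_setOf_eq] at hω
    have hy : Y n ω = S₁.mulVec (Z ω) + μ₁ := hY1 n ω hc1
    rw [hy] at hω
    have hsl : 0 ≤ s1 n (S₁.mulVec (Z ω) + μ₁) := (hs0 n _).1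
    have hsu : s1 n (S₁.mulVec (Z ω) + μ₁) ≤ 1 := (hs0 n _).2
    set s := s1 n (S₁.mulVec (Z ω) + μ₁) with hs
    set z := Z ω with hz
    -- likelihood ratio bound
    have hpos1 : (0:ℝ) < (1-θ)*(1-π₁ n) := mul_pos h1θ (by linarith [hπn.2])
    have hr : (m₀:ℝ) ≤ θ * π₁ n / ((1-θ) * (1 - π₁ n)) := by
      rw [le_div_iff₀ hpos1]
      calc (m₀:ℝ) * ((1-θ)*(1-π₁ n)) ≤ (m₀:ℝ) * ((1-θ)*κ) := by
            apply mul_le_mul_of_nonneg_left _ (Nat.cast_nonneg m₀)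
            exact mul_le_mul_of_nonneg_left h1πκ h1θ.le
        _ = (m₀:ℝ) * (θ / (2*((m₀:ℝ)+1))) := by rw [mul_comm (1-θ) κ, hκA]
        _ ≤ θ/2 := by
            rw [mul_div_assoc', div_le_div_iff₀ (by positivity) (by norm_num)]
            nlinarith [hθ0.le, Nat.cast_nonneg (α := ℝ) m₀]
        _ ≤ θ * π₁ n := by nlinarith [hθ0.le]
    have hφle : gphi p μ₂ Sig₂ (S₁.mulVec z + μ₁)
        ≤ θ * π₁ n / ((1-θ)*(1-π₁ n)) * gphi p μ₁ Sig₁ (S₁.mulVec z + μ₁) := by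
      have hgr : g ω ≤ θ * π₁ n / ((1-θ)*(1-π₁ n)) := le_trans hgm.le hr
      have hgω : g ω = gphi p μ₂ Sig₂ (S₁.mulVec z + μ₁) / gphi p μ₁ Sig₁ (S₁.mulVec z + μ₁) := rfl
      rw [hgω, div_le_iff₀ (gphi_pos p μ₁ hSig₁ _)] at hgr
      exact hgr
    have hw : 1 - θ ≤ wpost p μ₁ μ₂ Sig₁ Sig₂ (π₁ n) (1 - π₁ n) (S₁.mulVec z + μ₁) :=
      wpost_ge p μ₁ μ₂ Sig₁ Sig₂ hSig₁ hSig₂ hπn ⟨hθ0, hθ1⟩ _ hφle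
    have hsθ : 1 - s ≤ 2*θ := le_trans (hs1 n (S₁.mulVec z + μ₁)) (by linarith)
    -- norm bound
    have halg := Tstd_sub p μ₁ μ₂ S₁ S₂ (isUnit_iff_ne_zero.mpr hS₁.det_pos.ne') s z
    have hvB : ‖(S₂⁻¹ * S₁ - 1).mulVec z + s • S₁⁻¹.mulVec (μ₁ - μ₂)
        + (1 - s) • S₂⁻¹.mulVec (μ₁ - μ₂)‖ ≤ B := by
      refine le_trans norm_add₃_le ?_
      rw [hB]
      refine add_le_add (add_le_add ?_ ?_) ?_
      · exact le_trans (mulVec_norm_le p _ z)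
          (mul_le_mul_of_nonneg_left hZM.le hK0)
      · rw [norm_smul, Real.norm_eq_abs, abs_of_nonneg hsl]
        nlinarith [norm_nonneg (S₁⁻¹.mulVec (μ₁ - μ₂))]
      · rw [norm_smul, Real.norm_eq_abs, abs_of_nonneg (by linarith : (0:ℝ) ≤ 1 - s)]
        nlinarith [norm_nonneg (S₂⁻¹.mulVec (μ₁ - μ₂))]
    have hvnn := norm_nonneg ((S₂⁻¹ * S₁ - 1).mulVec z + s • S₁⁻¹.mulVec (μ₁ - μ₂)
      + (1 - s) • S₂⁻¹.mulVec (μ₁ - μ₂))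
    have hdist : dist (Tstd p μ₁ μ₂ S₁ S₂ s (S₁.mulVec z + μ₁)) z < ε := by
      rw [dist_eq_norm, halg, norm_smul, Real.norm_eq_abs,
        abs_of_nonneg (by linarith : (0:ℝ) ≤ 1 - s)]
      clear_value K B θ κ s z
      have e1 := mul_le_mul_of_nonneg_right hsθ hvnn
      have e2 := mul_le_mul_of_nonneg_left hvB (by linarith : (0:ℝ) ≤ 2*θ)
      have e3 : θ * (2 * (B+1)) = (2*θ)*B + 2*θ := by ring
      linarith
    linarith
  show P {ω | ε ≤ dist (Tstd p μ₁ μ₂ S₁ S₂ (s1 n (Y n ω)) (Y n ω)) (Z ω)} ≤ δ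
  calc P {ω | ε ≤ dist (Tstd p μ₁ μ₂ S₁ S₂ (s1 n (Y n ω)) (Y n ω)) (Z ω)}
      ≤ P (({ω | c n ω ≠ 1} ∪ {ω | (M:ℝ) ≤ ‖Z ω‖}) ∪ {ω | (m₀:ℝ) ≤ g ω}) :=
        measure_mono hsub
    _ ≤ P ({ω | c n ω ≠ 1} ∪ {ω | (M:ℝ) ≤ ‖Z ω‖}) + P {ω | (m₀:ℝ) ≤ g ω} :=
        measure_union_le _ _
    _ ≤ P {ω | c n ω ≠ 1} + P {ω | (M:ℝ) ≤ ‖Z ω‖} + P {ω | (m₀:ℝ) ≤ g ω} := by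
        exact add_le_add (measure_union_le _ _) le_rfl
    _ ≤ δ/3 + δ/3 + δ/3 := by
        refine add_le_add (add_le_add ?_ ?_) ?_
        · have hset : {ω | c n ω ≠ 1} = {ω | c n ω = 1}ᶜ := rfl
          have hmeas : MeasurableSet {ω | c n ω = 1} :=
            (hcmeas n) (measurableSet_singleton 1)
          rw [hset, measure_compl hmeas (measure_ne_top _ _), hc n, measure_univ]
          have heq : (1:ENNReal) - ENNReal.ofReal (π₁ n) = ENNReal.ofReal (1 - π₁ n) := by
            rw [ENNReal.ofReal_sub 1 (le_of_lt (hπ n).1), ENNReal.ofReal_one]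
          rw [heq]
          exact hn1.le
        · exact hM.le
        · exact hm₀.le
    _ = δ := ENNReal.add_thirds δ

/-- Theorem 1, part 1: fix `(Δ₁, τ) ∉ Θ₀` (bounded, since fixed).
If the mixture probabilities satisfy `π₁⁽ⁿ⁾ → 1` or `π₂⁽ⁿ⁾ → 1`, then the
standardized score `T⁽¹⁾` (hard or soft assignment) converges in probability to the
standard normal vector `Z` used to generate the observation. -/
theorem stmt6 {Ω : Type*} [MeasurableSpace Ω] (P : Measure Ω) [IsProbabilityMeasure P]
    (p : ℕ) (μ₁ μ₂ : Fin p → ℝ)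
    (Sig₁ Sig₂ S₁ S₂ : Matrix (Fin p) (Fin p) ℝ)
    (hSig₁ : Sig₁.PosDef) (hSig₂ : Sig₂.PosDef)
    (hS₁ : S₁.PosDef) (hS₂ : S₂.PosDef)
    (hsq₁ : S₁ * S₁ = Sig₁) (hsq₂ : S₂ * S₂ = Sig₂)
    -- (Δ₁, τ) ∈ Θ₀ᶜ :
    (hΘ : ¬(S₁⁻¹.mulVec (μ₁ - μ₂) = 0 ∧ S₂⁻¹ * S₁ = 1))
    (π₁ : ℕ → ℝ) (hπ : ∀ n, π₁ n ∈ Set.Ioo (0 : ℝ) 1)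
    (Z : Ω → Fin p → ℝ) (c : ℕ → Ω → Fin 2)
    (hZmeas : Measurable Z) (hcmeas : ∀ n, Measurable (c n))
    (hZ : Measure.map Z P = Measure.pi fun _ : Fin p => gaussianReal 0 1)
    (hc : ∀ n, P {ω | c n ω = 1} = ENNReal.ofReal (π₁ n))
    (hindep : ∀ n, IndepFun Z (c n) P)
    (Y : ℕ → Ω → Fin p → ℝ)
    (hY : ∀ n ω, Y n ω = if c n ω = 1 then S₁.mulVec (Z ω) + μ₁ else S₂.mulVec (Z ω) + μ₂)
    (s1 : ℕ → (Fin p → ℝ) → ℝ)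
    -- `s1` is the hard assignment or the soft assignment:
    (hassign :
      (∀ n, s1 n = fun y =>
        if 1 / 2 < wpost p μ₁ μ₂ Sig₁ Sig₂ (π₁ n) (1 - π₁ n) y then 1 else 0)
      ∨ (∀ n, s1 n = fun y => wpost p μ₁ μ₂ Sig₁ Sig₂ (π₁ n) (1 - π₁ n) y))
    (hlim : Tendsto π₁ atTop (nhds 1) ∨ Tendsto π₁ atTop (nhds 0)) :
    TendstoInMeasure P (fun n ω => Tstd p μ₁ μ₂ S₁ S₂ (s1 n (Y n ω)) (Y n ω)) atTop Z := by
  have hwmem : ∀ n y, wpost p μ₁ μ₂ Sig₁ Sig₂ (π₁ n) (1 - π₁ n) y ∈ Set.Ioo (0:ℝ) 1 :=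
    fun n y => wpost_mem p μ₁ μ₂ Sig₁ Sig₂ hSig₁ hSig₂ (hπ n).1
      (by linarith [(hπ n).2]) y
  have hs0 : ∀ n y, s1 n y ∈ Set.Icc (0:ℝ) 1 := by
    intro n y
    rcases hassign with h | h
    · rw [h n]; dsimp only; split
      · exact ⟨zero_le_one, le_refl 1⟩
      · exact ⟨le_refl 0, zero_le_one⟩
    · rw [h n]; exact ⟨(hwmem n y).1.le, (hwmem n y).2.le⟩
  have hs1 : ∀ n y, 1 - s1 n y ≤ 2 * (1 - wpost p μ₁ μ₂ Sig₁ Sig₂ (π₁ n) (1 - π₁ n) y) := by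
    intro n y
    have hw := hwmem n y
    rcases hassign with h | h
    · rw [h n]; dsimp only; split
      · linarith [hw.2]
      · rename_i hlt; push_neg at hlt; linarith
    · rw [h n]; dsimp only; linarith [hw.1, hw.2]
  have hs1' : ∀ n y, s1 n y ≤ 2 * wpost p μ₁ μ₂ Sig₁ Sig₂ (π₁ n) (1 - π₁ n) y := by
    intro n y
    have hw := hwmem n y
    rcases hassign with h | h
    · rw [h n]; dsimp only; split
      · rename_i hlt; linarith
      · linarith [hw.1]
    · rw [h n]; dsimp only; linarith [hw.1, hw.2]
  rcases hlim with hlim | hlim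
  · exact core P p μ₁ μ₂ Sig₁ Sig₂ S₁ S₂ hSig₁ hSig₂ hS₁ π₁ hπ Z c hZmeas hcmeas hc Y
      (fun n ω h => by rw [hY n ω, if_pos h]) s1 hs0 hs1 hlim
  · -- case π₁ → 0 : swap the roles of the two classes
    have hπ' : ∀ n, (1 - π₁ n) ∈ Set.Ioo (0:ℝ) 1 :=
      fun n => ⟨by linarith [(hπ n).2], by linarith [(hπ n).1]⟩
    have hmeas1 : ∀ n, MeasurableSet {ω | c n ω = 1} :=
      fun n => (hcmeas n) (measurableSet_singleton 1)
    have hc'meas : ∀ n, Measurable (fun ω => if c n ω = 1 then (1:Fin 2) else 0) :=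
      fun n => Measurable.ite (hmeas1 n) measurable_const measurable_const
    have hc'set : ∀ n, {ω | (if c n ω = 1 then (0:Fin 2) else 1) = 1} = {ω | c n ω = 1}ᶜ := by
      intro n
      ext ω
      by_cases h : c n ω = 1 <;> simp [h]
    have hc'measurable : ∀ n, Measurable (fun ω => if c n ω = 1 then (0:Fin 2) else 1) :=
      fun n => Measurable.ite (hmeas1 n) measurable_const measurable_const
    have hc' : ∀ n, P {ω | (if c n ω = 1 then (0:Fin 2) else 1) = 1}
        = ENNReal.ofReal (1 - π₁ n) := by
      intro n
      rw [hc'set n, measure_compl (hmeas1 n) (measure_ne_top _ _), hc n, measure_univ,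
        ENNReal.ofReal_sub 1 (le_of_lt (hπ n).1), ENNReal.ofReal_one]
    have hY1' : ∀ n ω, (if c n ω = 1 then (0:Fin 2) else 1) = 1 →
        Y n ω = S₂.mulVec (Z ω) + μ₂ := by
      intro n ω h
      by_cases hcc : c n ω = 1
      · simp [hcc] at h
      · rw [hY n ω, if_neg hcc]
    have hs0' : ∀ n y, 1 - s1 n y ∈ Set.Icc (0:ℝ) 1 :=
      fun n y => ⟨by linarith [(hs0 n y).2], by linarith [(hs0 n y).1]⟩
    have hs1'' : ∀ n y, 1 - (1 - s1 n y)
        ≤ 2 * (1 - wpost p μ₂ μ₁ Sig₂ Sig₁ (1 - π₁ n) (1 - (1 - π₁ n)) y) := by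
      intro n y
      have heq : 1 - (1 - π₁ n) = π₁ n := by ring
      rw [heq, wpost_swap p μ₁ μ₂ Sig₁ Sig₂ hSig₁ hSig₂ (hπ n).1
        (by linarith [(hπ n).2] : (0:ℝ) < 1 - π₁ n) y]
      have := hs1' n y
      linarith
    have hlim' : Tendsto (fun n => 1 - π₁ n) atTop (nhds 1) := by
      simpa using hlim.const_sub 1
    have key := core P p μ₂ μ₁ Sig₂ Sig₁ S₂ S₁ hSig₂ hSig₁ hS₂ (fun n => 1 - π₁ n) hπ' Z
      (fun n ω => if c n ω = 1 then (0:Fin 2) else 1) hZmeas hc'measurable hc' Y hY1'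
      (fun n y => 1 - s1 n y) hs0' hs1'' hlim'
    have hfun : (fun (n : ℕ) (ω : Ω) => Tstd p μ₂ μ₁ S₂ S₁ (1 - s1 n (Y n ω)) (Y n ω))
        = (fun (n : ℕ) (ω : Ω) => Tstd p μ₁ μ₂ S₁ S₂ (s1 n (Y n ω)) (Y n ω)) := by
      funext n ω
      exact Tstd_swap p μ₁ μ₂ S₁ S₂ _ _
    rw [hfun] at key
    exact key
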